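/- Assume (c̃₁ − c̃₂)(c̃₁ñ₁ − c̃₂ñ₂) < 0 with all constants positive. Then for λ with Re λ ≥ C₀ and |Im λ| ≤ δ₁ Re λ, the function g(σ) = c̃₁ρ̃₁(σ) − c̃₂ρ̃₂(σ) is nonzero for all σ ≥ 0 and satisfies |g(σ)|^{−1} ≤ C⟨σ/|λ|²⟩^{−1/2}, i.e. |g(σ)| ≥ C^{−1}⟨σ/|λ|²⟩^{1/2}. -/

import Mathlib

open Complex

lemma re_inv_sq (lam : ℂ) (h1 : 1 ≤ lam.re) (h2 : |lam.im| ≤ (1/2) * lam.re) :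
    (3/5) / ‖lam‖ ^ 2 ≤ (lam⁻¹ ^ 2).re := by
  have hx : 0 < lam.re := by linarith
  have hy2 : lam.im ^ 2 ≤ (1/2 * lam.re) ^ 2 := by
    have := abs_nonneg lam.im
    nlinarith [_root_.sq_abs lam.im]
  have hns : Complex.normSq lam = lam.re ^ 2 + lam.im ^ 2 := by
    simp [Complex.normSq_apply]; ring
  have hnspos : 0 < Complex.normSq lam := by rw [hns]; positivity
  have heq : lam⁻¹ ^ 2 = (lam ^ 2)⁻¹ := by rw [inv_pow]
  rw [heq, Complex.inv_re]
  have h2re : (lam ^ 2).re = lam.re ^ 2 - lam.im ^ 2 := by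
    rw [sq, Complex.mul_re]; ring
  have h2ns : Complex.normSq (lam ^ 2) = Complex.normSq lam ^ 2 := by
    rw [map_pow]
  have habs : ‖lam‖ ^ 2 = Complex.normSq lam := Complex.sq_norm lam
  rw [h2re, h2ns, habs]
  rw [div_le_div_iff₀ (by positivity) (by positivity)]
  rw [hns]
  nlinarith [sq_nonneg lam.im, sq_nonneg lam.re, sq_nonneg (lam.re^2 + lam.im^2)]

lemma numer_lb (a b c₁ z L s w : ℝ) (ha : 0 < a) (hb : 0 < b)
    (hc1 : c₁ = min (3*a/5) b) (hz : 0 ≤ z) (hL : 0 < L)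
    (hw : 3/5/L^2 ≤ w) (hs : 0 ≤ s) (hsz : s ≤ z/L^2) :
    c₁ * (1+s) ≤ a*z*w + b := by
  have h1 : c₁ ≤ b := hc1 ▸ min_le_right _ _
  have h1' : c₁ ≤ 3*a/5 := hc1 ▸ min_le_left _ _
  have h2 : c₁ * s ≤ a*z*w := by
    calc c₁ * s ≤ (3*a/5) * s := mul_le_mul_of_nonneg_right h1' hs
    _ ≤ (3*a/5) * (z/L^2) := mul_le_mul_of_nonneg_left hsz (by positivity)
    _ = a*z*(3/5/L^2) := by field_simp
    _ ≤ a*z*w := mul_le_mul_of_nonneg_left hw (by positivity)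
  nlinarith


lemma rho_bd' (lam ρ : ℂ) (z k L s M m k1 k2 : ℝ)
    (hz : 0 ≤ z) (hk : 0 < k) (hL1 : 1 ≤ L) (hs0 : 0 ≤ s)
    (hL_def : L = ‖lam‖)
    (hs_def : s = z / L^2 - m^2 / L^2)
    (hM_def : M = m^2 + k1 + k2 + 1)
    (hkle : k ≤ k1 + k2) (hk1 : 0 < k1) (hk2 : 0 < k2)
    (hr : ρ ^ 2 = ((z:ℝ):ℂ) * lam⁻¹^2 - ((k:ℝ):ℂ)) :
    ‖ρ‖ ≤ Real.sqrt M * Real.sqrt (1+s) := by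
  have hL0 : (0:ℝ) < L := by linarith
  have hlam0 : lam ≠ 0 := by
    intro h; rw [h] at hL_def; simp at hL_def; rw [hL_def] at hL0; linarith
  have hM0 : (0:ℝ) < M := by nlinarith [sq_nonneg m]
  have habsw : ‖lam⁻¹ ^ 2‖ = 1 / L^2 := by
    rw [norm_pow, norm_inv, ← hL_def]; field_simp
  have hsq : (‖ρ‖)^2 ≤ M * (1+s) := by
    have h1 : (‖ρ‖)^2 = ‖ρ^2‖ := (norm_pow ρ 2).symm
    have h2 : ‖((z:ℝ):ℂ) * lam⁻¹^2 - ((k:ℝ):ℂ)‖ ≤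
        ‖((z:ℝ):ℂ) * lam⁻¹^2‖ + ‖((k:ℝ):ℂ)‖ := by
      exact norm_sub_le _ _
    have h3 : ‖((z:ℝ):ℂ) * lam⁻¹^2‖ = z * (1/L^2) := by
      rw [norm_mul, habsw, Complex.norm_real, Real.norm_eq_abs, _root_.abs_of_nonneg hz]
    have h4 : ‖((k:ℝ):ℂ)‖ = k := by
      rw [Complex.norm_real, Real.norm_eq_abs, _root_.abs_of_pos hk]
    have hL2 : (1:ℝ) ≤ L^2 := by nlinarith
    have hmL : m^2 / L^2 ≤ m^2 := div_le_self (sq_nonneg m) hL2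
    have h5 : z * (1/L^2) = s + m^2/L^2 := by rw [hs_def]; ring
    have h6 : z * (1/L^2) + k ≤ M * (1+s) := by
      rw [h5, hM_def]
      have hMs : s ≤ (m^2 + k1 + k2 + 1) * s := by nlinarith [sq_nonneg m]
      nlinarith
    calc (‖ρ‖)^2 = ‖ρ^2‖ := h1
      _ = ‖((z:ℝ):ℂ) * lam⁻¹^2 - ((k:ℝ):ℂ)‖ := by rw [hr]
      _ ≤ ‖((z:ℝ):ℂ) * lam⁻¹^2‖ + ‖((k:ℝ):ℂ)‖ := h2
      _ = z * (1/L^2) + k := by rw [h3, h4]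
      _ ≤ M * (1+s) := h6
  have hss := Real.sqrt_le_sqrt hsq
  rwa [Real.sqrt_sq (norm_nonneg ρ), Real.sqrt_mul (le_of_lt hM0)] at hss

lemma sq_aux (s : ℝ) (hs : 0 ≤ s) : 1 + s^2 ≤ (1+s)^2 := by nlinarith

set_option maxHeartbeats 400000 in
/-- Anisotropic case: `(c̃₁ − c̃₂)(c̃₁ñ₁ − c̃₂ñ₂) < 0`. Then `g(σ) = c̃₁ρ̃₁(σ) − c̃₂ρ̃₂(σ)`
is nonzero for all `σ ≥ 0` and `|g(σ)| ≥ C⁻¹⟨σ/|λ|²⟩^{1/2}`, for `λ` with `Re λ ≥ C₀`,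
`|Im λ| ≤ δ₁ Re λ`. -/
theorem stmt10 (d : ℕ) (hd : 2 ≤ d)
    (c1 c2 n1 n2 : ℝ) (hc1 : 0 < c1) (hc2 : 0 < c2) (hn1 : 0 < n1) (hn2 : 0 < n2)
    (hcond : (c1 - c2) * (c1 * n1 - c2 * n2) < 0) :
    ∃ δ₁ > (0 : ℝ), ∃ C₀ > (0 : ℝ), ∃ C > (0 : ℝ),
      ∀ (lam : ℂ) (σ : ℝ) (ρ1 ρ2 : ℂ),
        C₀ ≤ lam.re → |lam.im| ≤ δ₁ * lam.re → 0 ≤ σ →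
        ρ1 ^ 2 = ((σ : ℂ) + (((d : ℂ) - 2) / 2) ^ 2) * lam⁻¹ ^ 2 - (n1 / c1 : ℝ) →
        ρ2 ^ 2 = ((σ : ℂ) + (((d : ℂ) - 2) / 2) ^ 2) * lam⁻¹ ^ 2 - (n2 / c2 : ℝ) →
        0 < ρ1.re → 0 < ρ2.re →
        (c1 : ℂ) * ρ1 - (c2 : ℂ) * ρ2 ≠ 0 ∧
        C⁻¹ * (1 + (σ / ‖lam‖ ^ 2) ^ 2) ^ ((1 : ℝ) / 4) ≤
          ‖(c1 : ℂ) * ρ1 - (c2 : ℂ) * ρ2‖ := by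
  obtain ⟨m, hm_def⟩ : ∃ x : ℝ, x = ((d : ℝ) - 2) / 2 := ⟨_, rfl⟩
  have hm : 0 ≤ m := by
    have h2d : (2 : ℝ) ≤ (d : ℝ) := by exact_mod_cast hd
    rw [hm_def]; linarith
  obtain ⟨A, hA_def⟩ : ∃ x : ℝ, x = c1^2 - c2^2 := ⟨_, rfl⟩
  obtain ⟨B, hB_def⟩ : ∃ x : ℝ, x = c1*n1 - c2*n2 := ⟨_, rfl⟩
  have hAB : A * B < 0 := by
    have : A * B = (c1 + c2) * ((c1 - c2) * (c1*n1 - c2*n2)) := by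
      rw [hA_def, hB_def]; ring
    rw [this]
    exact mul_neg_of_pos_of_neg (by linarith) hcond
  have hA0 : A ≠ 0 := fun h => by simp [h] at hAB
  have hB0 : B ≠ 0 := fun h => by simp [h] at hAB
  obtain ⟨a, ha_def⟩ : ∃ x : ℝ, x = |A| := ⟨_, rfl⟩
  obtain ⟨b, hb_def⟩ : ∃ x : ℝ, x = |B| := ⟨_, rfl⟩
  have ha : 0 < a := ha_def ▸ abs_pos.mpr hA0
  have hb : 0 < b := hb_def ▸ abs_pos.mpr hB0
  obtain ⟨c₁, hc₁_def⟩ : ∃ x : ℝ, x = min (3*a/5) b := ⟨_, rfl⟩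
  have hc₁ : 0 < c₁ := hc₁_def ▸ lt_min (by positivity) hb
  obtain ⟨k1, hk1_def⟩ : ∃ x : ℝ, x = n1/c1 := ⟨_, rfl⟩
  obtain ⟨k2, hk2_def⟩ : ∃ x : ℝ, x = n2/c2 := ⟨_, rfl⟩
  have hk1 : 0 < k1 := by rw [hk1_def]; positivity
  have hk2 : 0 < k2 := by rw [hk2_def]; positivity
  obtain ⟨M, hM_def⟩ : ∃ x : ℝ, x = m^2 + k1 + k2 + 1 := ⟨_, rfl⟩
  have hM1 : 1 ≤ M := by rw [hM_def]; nlinarith [sq_nonneg m]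
  have hM0 : 0 < M := by linarith
  obtain ⟨C₂, hC₂_def⟩ : ∃ x : ℝ, x = (c1 + c2) * Real.sqrt M := ⟨_, rfl⟩
  have hC₂ : 0 < C₂ := by rw [hC₂_def]; positivity
  refine ⟨1/2, by norm_num, 1, by norm_num, C₂ / c₁, by positivity, ?_⟩
  intro lam σ ρ1 ρ2 hlre him hσ hr1 hr2 hre1 hre2
  obtain ⟨L, hL_def⟩ : ∃ x : ℝ, x = ‖lam‖ := ⟨_, rfl⟩
  have hL1 : 1 ≤ L := by
    rw [hL_def]
    exact le_trans hlre (le_trans (le_abs_self _) (Complex.abs_re_le_norm lam))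
  have hL0 : 0 < L := by linarith
  obtain ⟨s, hs_def⟩ : ∃ x : ℝ, x = σ / L^2 := ⟨_, rfl⟩
  have hs : 0 ≤ s := by rw [hs_def]; positivity
  obtain ⟨z, hz_def⟩ : ∃ x : ℝ, x = σ + m^2 := ⟨_, rfl⟩
  have hz : 0 ≤ z := by rw [hz_def]; positivity
  have hsz : s ≤ z / L^2 := by
    rw [hs_def, hz_def]
    apply div_le_div_of_nonneg_right _ (by positivity)
    · nlinarith [sq_nonneg m]
  have hzC : ((σ : ℂ) + (((d : ℂ) - 2) / 2) ^ 2) = ((z : ℝ) : ℂ) := by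
    rw [hz_def, hm_def]; push_cast; ring
  obtain ⟨w, hw_def⟩ : ∃ x : ℝ, x = (lam⁻¹ ^ 2).re := ⟨_, rfl⟩
  have hw : 3/5/L^2 ≤ w := by
    rw [hw_def, hL_def]; exact re_inv_sq lam hlre him
  have hw0 : 0 ≤ w := le_trans (by positivity) hw
  obtain ⟨N, hN_def⟩ : ∃ x : ℂ, x = (c1 : ℂ)^2 * ρ1^2 - (c2 : ℂ)^2 * ρ2^2 := ⟨_, rfl⟩
  have hN : N = ((A : ℝ) : ℂ) * ((z : ℝ) : ℂ) * lam⁻¹^2 - ((B : ℝ) : ℂ) := by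
    rw [hN_def, hr1, hr2, hzC]
    have hABC : ((A : ℝ) : ℂ) = (c1:ℂ)^2 - (c2:ℂ)^2 := by rw [hA_def]; push_cast; ring
    have hBC : ((B : ℝ) : ℂ) = (c1:ℂ)*(n1:ℂ) - (c2:ℂ)*(n2:ℂ) := by
      rw [hB_def]; push_cast; ring
    have hk1C : ((n1/c1 : ℝ) : ℂ) = (n1:ℂ)/(c1:ℂ) := by push_cast; ring
    have hk2C : ((n2/c2 : ℝ) : ℂ) = (n2:ℂ)/(c2:ℂ) := by push_cast; ring
    rw [hABC, hBC, hk1C, hk2C]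
    have hc1C : (c1:ℂ) ≠ 0 := by exact_mod_cast hc1.ne'
    have hc2C : (c2:ℂ) ≠ 0 := by exact_mod_cast hc2.ne'
    field_simp
    ring
  have hNre : N.re = A * z * w - B := by
    rw [hN]
    rw [show ((A:ℝ):ℂ) * ((z:ℝ):ℂ) = (((A*z):ℝ):ℂ) by push_cast; ring]
    rw [Complex.sub_re, Complex.ofReal_re, Complex.re_ofReal_mul, hw_def]
  have habsw : ‖lam⁻¹ ^ 2‖ = 1 / L^2 := by
    rw [norm_pow, norm_inv, ← hL_def]
    field_simp
  have hNre_lb : c₁ * (1 + s) ≤ |N.re| := by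
    rcases mul_neg_iff.mp hAB with ⟨hApos, hBneg⟩ | ⟨hAneg, hBpos⟩
    · have haA : a = A := ha_def ▸ abs_of_pos hApos
      have hbB : b = -B := hb_def ▸ abs_of_neg hBneg
      have key : c₁ * (1+s) ≤ a * z * w + b :=
        numer_lb a b c₁ z L s w ha hb hc₁_def hz hL0 hw hs hsz
      rw [hNre]
      rw [haA, hbB] at key
      have hps : 0 < c₁ * (1+s) := mul_pos hc₁ (by linarith)
      have hpos : 0 < A * z * w - B := by linarith
      rw [abs_of_pos hpos]; linarith
    · have haA : a = -A := ha_def ▸ abs_of_neg hAneg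
      have hbB : b = B := hb_def ▸ abs_of_pos hBpos
      have key : c₁ * (1+s) ≤ a * z * w + b :=
        numer_lb a b c₁ z L s w ha hb hc₁_def hz hL0 hw hs hsz
      rw [hNre]
      rw [haA, hbB] at key
      have hps : 0 < c₁ * (1+s) := mul_pos hc₁ (by linarith)
      have hneg : A * z * w - B < 0 := by linarith
      rw [abs_of_neg hneg]; linarith
  have hN_lb : c₁ * (1 + s) ≤ ‖N‖ :=
    le_trans hNre_lb (Complex.abs_re_le_norm N)
  have hs_def' : s = z / L^2 - m^2 / L^2 := by rw [hs_def, hz_def]; ring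
  have hbd1 : ‖ρ1‖ ≤ Real.sqrt M * Real.sqrt (1+s) := by
    refine rho_bd' lam ρ1 z k1 L s M m k1 k2 hz hk1 hL1 hs hL_def hs_def' hM_def
      (by linarith) hk1 hk2 ?_
    rw [hr1, hzC, hk1_def]
  have hbd2 : ‖ρ2‖ ≤ Real.sqrt M * Real.sqrt (1+s) := by
    refine rho_bd' lam ρ2 z k2 L s M m k1 k2 hz hk2 hL1 hs hL_def hs_def' hM_def
      (by linarith) hk1 hk2 ?_
    rw [hr2, hzC, hk2_def]
  -- denominator
  obtain ⟨D, hD_def⟩ : ∃ x : ℂ, x = (c1:ℂ) * ρ1 + (c2:ℂ) * ρ2 := ⟨_, rfl⟩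
  have hDre : 0 < D.re := by
    rw [hD_def]
    simp only [Complex.add_re, Complex.mul_re, Complex.ofReal_re, Complex.ofReal_im,
      zero_mul, sub_zero]
    exact add_pos (mul_pos hc1 hre1) (mul_pos hc2 hre2)
  have hDne : D ≠ 0 := fun h => by rw [h] at hDre; simp at hDre
  have hDabs : 0 < ‖D‖ := norm_pos_iff.mpr hDne
  have hD_ub : ‖D‖ ≤ C₂ * Real.sqrt (1+s) := by
    rw [hD_def]
    calc ‖(c1:ℂ)*ρ1 + (c2:ℂ)*ρ2‖
        ≤ ‖(c1:ℂ)*ρ1‖ + ‖(c2:ℂ)*ρ2‖ := norm_add_le _ _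
      _ = c1 * ‖ρ1‖ + c2 * ‖ρ2‖ := by
          rw [norm_mul, norm_mul, Complex.norm_real, Complex.norm_real, Real.norm_eq_abs, Real.norm_eq_abs,
            abs_of_pos hc1, abs_of_pos hc2]
      _ ≤ c1 * (Real.sqrt M * Real.sqrt (1+s)) + c2 * (Real.sqrt M * Real.sqrt (1+s)) := by
          gcongr
      _ = C₂ * Real.sqrt (1+s) := by rw [hC₂_def]; ring
  obtain ⟨g, hg_def⟩ : ∃ x : ℂ, x = (c1:ℂ) * ρ1 - (c2:ℂ) * ρ2 := ⟨_, rfl⟩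
  have hgD : g * D = N := by rw [hg_def, hD_def, hN_def]; ring
  have hNne : N ≠ 0 := by
    intro h
    rw [h] at hN_lb
    simp only [norm_zero] at hN_lb
    have := mul_pos hc₁ (show (0:ℝ) < 1 + s by linarith)
    linarith
  have hgne : g ≠ 0 := fun h => hNne (by rw [← hgD, h, zero_mul])
  rw [← hg_def]
  refine ⟨hgne, ?_⟩
  have hgabs : ‖g‖ * ‖D‖ = ‖N‖ := by
    rw [← norm_mul, hgD]
  have hsqrt : 0 < Real.sqrt (1+s) := Real.sqrt_pos.mpr (by linarith)
  have hsq1 : Real.sqrt (1+s) * Real.sqrt (1+s) = 1 + s := Real.mul_self_sqrt (by linarith)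
  have h5 : c₁ * Real.sqrt (1+s) ≤ ‖g‖ * C₂ := by
    have h6 : c₁ * (1+s) ≤ ‖g‖ * (C₂ * Real.sqrt (1+s)) := by
      calc c₁ * (1+s) ≤ ‖N‖ := hN_lb
        _ = ‖g‖ * ‖D‖ := hgabs.symm
        _ ≤ ‖g‖ * (C₂ * Real.sqrt (1+s)) := by
            gcongr
    have h7 : c₁ * Real.sqrt (1+s) * Real.sqrt (1+s) ≤
        ‖g‖ * C₂ * Real.sqrt (1+s) := by
      calc c₁ * Real.sqrt (1+s) * Real.sqrt (1+s) = c₁ * (1+s) := by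
            rw [mul_assoc, hsq1]
        _ ≤ ‖g‖ * (C₂ * Real.sqrt (1+s)) := h6
        _ = ‖g‖ * C₂ * Real.sqrt (1+s) := by ring
    exact le_of_mul_le_mul_right h7 hsqrt
  have hrpow : (1 + s^2) ^ ((1:ℝ)/4) ≤ Real.sqrt (1+s) := by
    have h8 : (1 + s^2 : ℝ) ^ ((1:ℝ)/4) ≤ ((1+s)^2 : ℝ) ^ ((1:ℝ)/4) :=
      Real.rpow_le_rpow (by positivity) (sq_aux s hs) (by norm_num)
    have h9 : ((1+s)^2 : ℝ) ^ ((1:ℝ)/4) = (1+s) ^ ((1:ℝ)/2) := by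
      rw [← Real.rpow_natCast (1+s) 2, ← Real.rpow_mul (by linarith)]
      norm_num
    rw [h9] at h8
    rwa [← Real.sqrt_eq_rpow] at h8
  have hCinv : (C₂ / c₁)⁻¹ = c₁ / C₂ := inv_div C₂ c₁
  rw [hCinv]
  have hgoal_eq : σ / ‖lam‖ ^ 2 = s := by rw [hs_def, hL_def]
  rw [hgoal_eq]
  calc c₁ / C₂ * (1 + s^2) ^ ((1:ℝ)/4)
      ≤ c₁ / C₂ * Real.sqrt (1+s) := by gcongr
    _ ≤ ‖g‖ := by
        rw [div_mul_eq_mul_div, div_le_iff₀ hC₂]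
        linarith [h5]
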